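/- Let φ : [0,∞) → ℂ² be smooth with φ and all its derivatives decaying faster than any polynomial at infinity (Schwartz class on the half-line). Then ∫₀^∞ ‖−iσ₂φ'(t) + tσ₁φ(t)‖²_{ℂ²} dt = ∫₀^∞ ‖φ'(t)‖²_{ℂ²} dt + ∫₀^∞ t²‖φ(t)‖²_{ℂ²} dt − ∫₀^∞ ⟨φ(t), σ₃φ(t)⟩_{ℂ²} dt, where ⟨φ, σ₃φ⟩_{ℂ²} = |φ₁|² − |φ₂|². -/

import Mathlib

open MeasureTheory Complex

private lemma aux_integrable {f : ℝ → ℝ} (hf : Continuous f) {C : ℝ}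
    (h : ∀ t : ℝ, 0 ≤ t → (1 + t ^ 2) * |f t| ≤ C) :
    IntegrableOn f (Set.Ioi (0 : ℝ)) := by
  have hg : IntegrableOn (fun t : ℝ => C * (1 + t ^ 2)⁻¹) (Set.Ioi (0 : ℝ)) :=
    (integrable_inv_one_add_sq.const_mul C).integrableOn
  refine hg.mono' hf.aestronglyMeasurable.restrict ?_
  filter_upwards [ae_restrict_mem measurableSet_Ioi] with t ht
  have h1 : (0 : ℝ) < 1 + t ^ 2 := by positivity
  have h2 := h t (le_of_lt ht)
  rw [Real.norm_eq_abs]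
  rw [mul_comm C, ← div_eq_inv_mul, le_div_iff₀ h1]
  linarith [h2]

set_option maxHeartbeats 1000000 in
/-- For a Schwartz-class spinor `φ = (φ₁, φ₂)` on the half-line, the energy identity
`∫₀^∞ ‖−iσ₂φ' + tσ₁φ‖² dt = ∫₀^∞ ‖φ'‖² dt + ∫₀^∞ t²‖φ‖² dt − ∫₀^∞ ⟨φ, σ₃φ⟩ dt`,
where `−iσ₂φ' + tσ₁φ = (−φ₂' + tφ₂, φ₁' + tφ₁)` and `⟨φ, σ₃φ⟩ = |φ₁|² − |φ₂|²`. -/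
theorem half_line_dirac_energy_identity
    (φ₁ φ₂ : ℝ → ℂ) (hφ₁ : ContDiff ℝ (⊤ : ℕ∞) φ₁) (hφ₂ : ContDiff ℝ (⊤ : ℕ∞) φ₂)
    (hdecay : ∀ n k : ℕ, ∃ C : ℝ, ∀ t : ℝ, 0 ≤ t →
      |t| ^ k * ‖iteratedDeriv n φ₁ t‖ ≤ C ∧ |t| ^ k * ‖iteratedDeriv n φ₂ t‖ ≤ C) :
    (∫ t in Set.Ioi (0 : ℝ),
        (‖-(deriv φ₂ t) + (t : ℂ) * φ₂ t‖ ^ 2 + ‖deriv φ₁ t + (t : ℂ) * φ₁ t‖ ^ 2))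
      = (∫ t in Set.Ioi (0 : ℝ), (‖deriv φ₁ t‖ ^ 2 + ‖deriv φ₂ t‖ ^ 2))
        + (∫ t in Set.Ioi (0 : ℝ), t ^ 2 * (‖φ₁ t‖ ^ 2 + ‖φ₂ t‖ ^ 2))
        - ∫ t in Set.Ioi (0 : ℝ), (‖φ₁ t‖ ^ 2 - ‖φ₂ t‖ ^ 2) := by
  -- derivatives
  have hd₁ : ∀ t, HasDerivAt φ₁ (deriv φ₁ t) t := fun t =>
    ((hφ₁.differentiable (by simp)) t).hasDerivAt
  have hd₂ : ∀ t, HasDerivAt φ₂ (deriv φ₂ t) t := fun t =>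
    ((hφ₂.differentiable (by simp)) t).hasDerivAt
  have hc₁ : Continuous (deriv φ₁) := hφ₁.continuous_deriv (mod_cast le_top)
  have hc₂ : Continuous (deriv φ₂) := hφ₂.continuous_deriv (mod_cast le_top)
  -- decay constants
  obtain ⟨C00, hC00⟩ := hdecay 0 0
  obtain ⟨C01, hC01⟩ := hdecay 0 1
  obtain ⟨C02, hC02⟩ := hdecay 0 2
  obtain ⟨C10, hC10⟩ := hdecay 1 0
  obtain ⟨C11, hC11⟩ := hdecay 1 1
  simp only [iteratedDeriv_zero, iteratedDeriv_one, pow_zero, pow_one, one_mul] at hC00 hC01 hC02 hC10 hC11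
  have hC00n : 0 ≤ C00 := le_trans (norm_nonneg _) (hC00 0 le_rfl).1
  have hC01n : 0 ≤ C01 := by simpa using le_trans (by positivity) (hC01 0 le_rfl).1
  have hC02n : 0 ≤ C02 := by simpa using le_trans (by positivity) (hC02 0 le_rfl).1
  have hC10n : 0 ≤ C10 := le_trans (norm_nonneg _) (hC10 0 le_rfl).1
  have hC11n : 0 ≤ C11 := by simpa using le_trans (by positivity) (hC11 0 le_rfl).1
  -- abbreviations
  set A : ℝ → ℝ := fun t => ‖deriv φ₁ t‖ ^ 2 + ‖deriv φ₂ t‖ ^ 2 with hA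
  set B : ℝ → ℝ := fun t => t ^ 2 * (‖φ₁ t‖ ^ 2 + ‖φ₂ t‖ ^ 2) with hB
  set h : ℝ → ℝ := fun t => ‖φ₁ t‖ ^ 2 - ‖φ₂ t‖ ^ 2 with hh
  set X : ℝ → ℝ := fun t =>
    2 * t * (inner ℝ (deriv φ₁ t) (φ₁ t) : ℝ) - 2 * t * (inner ℝ (deriv φ₂ t) (φ₂ t) : ℝ) with hX
  -- pointwise identity
  have key : ∀ t : ℝ,
      ‖-(deriv φ₂ t) + (t : ℂ) * φ₂ t‖ ^ 2 + ‖deriv φ₁ t + (t : ℂ) * φ₁ t‖ ^ 2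
        = A t + B t + X t := by
    intro t
    have e1 : (t : ℂ) * φ₁ t = t • φ₁ t := (Complex.real_smul).symm
    have e2 : (t : ℂ) * φ₂ t = t • φ₂ t := (Complex.real_smul).symm
    have e3 : -(deriv φ₂ t) + t • φ₂ t = t • φ₂ t - deriv φ₂ t := by ring
    have n1 : ‖t • φ₁ t‖ ^ 2 = t ^ 2 * ‖φ₁ t‖ ^ 2 := by
      rw [norm_smul]; simp [Real.norm_eq_abs, mul_pow, sq_abs]
    have n2 : ‖t • φ₂ t‖ ^ 2 = t ^ 2 * ‖φ₂ t‖ ^ 2 := by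
      rw [norm_smul]; simp [Real.norm_eq_abs, mul_pow, sq_abs]
    have i1 : (inner ℝ (deriv φ₁ t) (t • φ₁ t) : ℝ) = t * (inner ℝ (deriv φ₁ t) (φ₁ t) : ℝ) :=
      real_inner_smul_right _ _ _
    have i2 : (inner ℝ (t • φ₂ t) (deriv φ₂ t) : ℝ) = t * (inner ℝ (deriv φ₂ t) (φ₂ t) : ℝ) := by
      rw [real_inner_smul_left, real_inner_comm]
    rw [e1, e2, e3, norm_sub_sq_real, norm_add_sq_real, n1, n2, i1, i2]
    simp only [hA, hB, hX]
    ring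
  -- derivative of h
  have hder : ∀ t : ℝ, HasDerivAt h
      (2 * (inner ℝ (deriv φ₁ t) (φ₁ t) : ℝ) - 2 * (inner ℝ (deriv φ₂ t) (φ₂ t) : ℝ)) t := by
    intro t
    have h1 : HasDerivAt (fun s => (inner ℝ (φ₁ s) (φ₁ s) : ℝ))
        ((inner ℝ (φ₁ t) (deriv φ₁ t) : ℝ) + (inner ℝ (deriv φ₁ t) (φ₁ t) : ℝ)) t :=
      (hd₁ t).inner ℝ (hd₁ t)
    have h2 : HasDerivAt (fun s => (inner ℝ (φ₂ s) (φ₂ s) : ℝ))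
        ((inner ℝ (φ₂ t) (deriv φ₂ t) : ℝ) + (inner ℝ (deriv φ₂ t) (φ₂ t) : ℝ)) t :=
      (hd₂ t).inner ℝ (hd₂ t)
    have e1 : (fun s => (inner ℝ (φ₁ s) (φ₁ s) : ℝ)) = fun s => ‖φ₁ s‖ ^ 2 := by
      funext s; exact real_inner_self_eq_norm_sq _
    have e2 : (fun s => (inner ℝ (φ₂ s) (φ₂ s) : ℝ)) = fun s => ‖φ₂ s‖ ^ 2 := by
      funext s; exact real_inner_self_eq_norm_sq _
    rw [e1] at h1; rw [e2] at h2
    have := h1.sub h2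
    refine this.congr_deriv ?_
    rw [real_inner_comm (φ₁ t), real_inner_comm (φ₂ t)]
    ring
  -- derivative of g = t * h t
  have hgder : ∀ t : ℝ, HasDerivAt (fun s => s * h s) (h t + X t) t := by
    intro t
    have := (hasDerivAt_id t).mul (hder t)
    refine this.congr_deriv ?_
    simp only [hX, id_eq]
    ring
  -- continuity
  have hcontφ₁ := hφ₁.continuous
  have hcontφ₂ := hφ₂.continuous
  have hcontA : Continuous A := by fun_prop
  have hcontB : Continuous B := by fun_prop
  have hconth : Continuous h := by fun_prop
  have hcontX : Continuous X := by
    apply Continuous.sub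
    · exact (continuous_const.mul continuous_id).mul (hc₁.inner hcontφ₁)
    · exact (continuous_const.mul continuous_id).mul (hc₂.inner hcontφ₂)
  -- integrability
  have intA : IntegrableOn A (Set.Ioi (0 : ℝ)) := by
    apply aux_integrable hcontA (C := 2 * C10 ^ 2 + 2 * C11 ^ 2)
    intro t ht
    have h1 := (hC10 t ht).1
    have h2 := (hC10 t ht).2
    have h3 := (hC11 t ht).1
    have h4 := (hC11 t ht).2
    rw [_root_.abs_of_nonneg ht] at h3 h4
    have n1 : 0 ≤ ‖deriv φ₁ t‖ := norm_nonneg _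
    have n2 : 0 ≤ ‖deriv φ₂ t‖ := norm_nonneg _
    have q1 : ‖deriv φ₁ t‖ ^ 2 ≤ C10 ^ 2 := pow_le_pow_left₀ n1 h1 2
    have q2 : ‖deriv φ₂ t‖ ^ 2 ≤ C10 ^ 2 := pow_le_pow_left₀ n2 h2 2
    have q3 : (t * ‖deriv φ₁ t‖) ^ 2 ≤ C11 ^ 2 := pow_le_pow_left₀ (by positivity) h3 2
    have q4 : (t * ‖deriv φ₂ t‖) ^ 2 ≤ C11 ^ 2 := pow_le_pow_left₀ (by positivity) h4 2
    have hAn : 0 ≤ A t := by positivity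
    rw [_root_.abs_of_nonneg hAn]
    simp only [hA]
    nlinarith [q1, q2, q3, q4]
  have intB : IntegrableOn B (Set.Ioi (0 : ℝ)) := by
    apply aux_integrable hcontB (C := 2 * C01 ^ 2 + 2 * C02 ^ 2)
    intro t ht
    have h1 := (hC01 t ht).1
    have h2 := (hC01 t ht).2
    have h3 := (hC02 t ht).1
    have h4 := (hC02 t ht).2
    rw [_root_.abs_of_nonneg ht] at h1 h2 h3 h4
    have q1 : (t * ‖φ₁ t‖) ^ 2 ≤ C01 ^ 2 := pow_le_pow_left₀ (by positivity) h1 2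
    have q2 : (t * ‖φ₂ t‖) ^ 2 ≤ C01 ^ 2 := pow_le_pow_left₀ (by positivity) h2 2
    have q3 : (t ^ 2 * ‖φ₁ t‖) ^ 2 ≤ C02 ^ 2 := pow_le_pow_left₀ (by positivity) h3 2
    have q4 : (t ^ 2 * ‖φ₂ t‖) ^ 2 ≤ C02 ^ 2 := pow_le_pow_left₀ (by positivity) h4 2
    have hBn : 0 ≤ B t := by positivity
    rw [_root_.abs_of_nonneg hBn]
    simp only [hB]
    nlinarith [q1, q2, q3, q4]
  have inth : IntegrableOn h (Set.Ioi (0 : ℝ)) := by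
    apply aux_integrable hconth (C := 2 * C00 ^ 2 + 2 * C01 ^ 2)
    intro t ht
    have h1 := (hC00 t ht).1
    have h2 := (hC00 t ht).2
    have h3 := (hC01 t ht).1
    have h4 := (hC01 t ht).2
    rw [_root_.abs_of_nonneg ht] at h3 h4
    have q1 : ‖φ₁ t‖ ^ 2 ≤ C00 ^ 2 := pow_le_pow_left₀ (norm_nonneg _) h1 2
    have q2 : ‖φ₂ t‖ ^ 2 ≤ C00 ^ 2 := pow_le_pow_left₀ (norm_nonneg _) h2 2
    have q3 : (t * ‖φ₁ t‖) ^ 2 ≤ C01 ^ 2 := pow_le_pow_left₀ (by positivity) h3 2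
    have q4 : (t * ‖φ₂ t‖) ^ 2 ≤ C01 ^ 2 := pow_le_pow_left₀ (by positivity) h4 2
    have habs : |h t| ≤ ‖φ₁ t‖ ^ 2 + ‖φ₂ t‖ ^ 2 := by
      rw [abs_le]; constructor <;> simp only [hh] <;> nlinarith [sq_nonneg ‖φ₁ t‖, sq_nonneg ‖φ₂ t‖]
    nlinarith [q1, q2, q3, q4, abs_nonneg (h t), sq_nonneg t]
  have intX : IntegrableOn X (Set.Ioi (0 : ℝ)) := by
    apply aux_integrable hcontX (C := 2 * (C11 * C00 + C11 * C02) + 2 * (C11 * C00 + C11 * C02))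
    intro t ht
    have a1 := (hC00 t ht).1
    have a2 := (hC00 t ht).2
    have b1 := (hC02 t ht).1
    have b2 := (hC02 t ht).2
    have c1 := (hC11 t ht).1
    have c2 := (hC11 t ht).2
    rw [_root_.abs_of_nonneg ht] at b1 b2 c1 c2
    have i1 : |(inner ℝ (deriv φ₁ t) (φ₁ t) : ℝ)| ≤ ‖deriv φ₁ t‖ * ‖φ₁ t‖ :=
      abs_real_inner_le_norm _ _
    have i2 : |(inner ℝ (deriv φ₂ t) (φ₂ t) : ℝ)| ≤ ‖deriv φ₂ t‖ * ‖φ₂ t‖ :=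
      abs_real_inner_le_norm _ _
    -- (1+t²) * t * ‖D‖ * ‖φ‖ = (t‖D‖)‖φ‖ + (t‖D‖)(t²‖φ‖) ≤ C11*C00 + C11*C02
    have k1 : (1 + t ^ 2) * (t * (‖deriv φ₁ t‖ * ‖φ₁ t‖)) ≤ C11 * C00 + C11 * C02 := by
      have m1 : (t * ‖deriv φ₁ t‖) * ‖φ₁ t‖ ≤ C11 * C00 :=
        mul_le_mul c1 a1 (norm_nonneg _) hC11n
      have m2 : (t * ‖deriv φ₁ t‖) * (t ^ 2 * ‖φ₁ t‖) ≤ C11 * C02 :=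
        mul_le_mul c1 b1 (by positivity) hC11n
      calc (1 + t ^ 2) * (t * (‖deriv φ₁ t‖ * ‖φ₁ t‖))
          = (t * ‖deriv φ₁ t‖) * ‖φ₁ t‖ + (t * ‖deriv φ₁ t‖) * (t ^ 2 * ‖φ₁ t‖) := by ring
        _ ≤ C11 * C00 + C11 * C02 := add_le_add m1 m2
    have k2 : (1 + t ^ 2) * (t * (‖deriv φ₂ t‖ * ‖φ₂ t‖)) ≤ C11 * C00 + C11 * C02 := by
      have m1 : (t * ‖deriv φ₂ t‖) * ‖φ₂ t‖ ≤ C11 * C00 :=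
        mul_le_mul c2 a2 (norm_nonneg _) hC11n
      have m2 : (t * ‖deriv φ₂ t‖) * (t ^ 2 * ‖φ₂ t‖) ≤ C11 * C02 :=
        mul_le_mul c2 b2 (by positivity) hC11n
      calc (1 + t ^ 2) * (t * (‖deriv φ₂ t‖ * ‖φ₂ t‖))
          = (t * ‖deriv φ₂ t‖) * ‖φ₂ t‖ + (t * ‖deriv φ₂ t‖) * (t ^ 2 * ‖φ₂ t‖) := by ring
        _ ≤ C11 * C00 + C11 * C02 := add_le_add m1 m2
    have habs : |X t| ≤ 2 * t * (‖deriv φ₁ t‖ * ‖φ₁ t‖) + 2 * t * (‖deriv φ₂ t‖ * ‖φ₂ t‖) := by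
      simp only [hX]
      calc |2 * t * (inner ℝ (deriv φ₁ t) (φ₁ t) : ℝ) - 2 * t * (inner ℝ (deriv φ₂ t) (φ₂ t) : ℝ)|
          ≤ |2 * t * (inner ℝ (deriv φ₁ t) (φ₁ t) : ℝ)| + |2 * t * (inner ℝ (deriv φ₂ t) (φ₂ t) : ℝ)| :=
            abs_sub _ _
        _ ≤ 2 * t * (‖deriv φ₁ t‖ * ‖φ₁ t‖) + 2 * t * (‖deriv φ₂ t‖ * ‖φ₂ t‖) := by
            rw [abs_mul, abs_mul, abs_mul, abs_mul]
            rw [_root_.abs_of_nonneg ht, _root_.abs_of_nonneg (by norm_num : (0:ℝ) ≤ 2)]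
            gcongr
    have ht2 : (0 : ℝ) < 1 + t ^ 2 := by positivity
    calc (1 + t ^ 2) * |X t|
        ≤ (1 + t ^ 2) * (2 * t * (‖deriv φ₁ t‖ * ‖φ₁ t‖) + 2 * t * (‖deriv φ₂ t‖ * ‖φ₂ t‖)) := by
          exact mul_le_mul_of_nonneg_left habs (le_of_lt ht2)
      _ = 2 * ((1 + t ^ 2) * (t * (‖deriv φ₁ t‖ * ‖φ₁ t‖)))
            + 2 * ((1 + t ^ 2) * (t * (‖deriv φ₂ t‖ * ‖φ₂ t‖))) := by ring
      _ ≤ 2 * (C11 * C00 + C11 * C02) + 2 * (C11 * C00 + C11 * C02) := by linarith [k1, k2]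
  -- boundary behaviour: t * h t → 0
  have hlim : Filter.Tendsto (fun t : ℝ => 2 * C01 * C02 / t ^ 2) Filter.atTop (nhds 0) :=
    Filter.Tendsto.div_atTop tendsto_const_nhds (Filter.tendsto_pow_atTop (by norm_num))
  have hg0 : Filter.Tendsto (fun t => t * h t) Filter.atTop (nhds 0) := by
    refine squeeze_zero_norm' ?_ hlim
    filter_upwards [Filter.eventually_ge_atTop (1 : ℝ)] with t ht1
    have ht : (0 : ℝ) ≤ t := le_trans zero_le_one ht1
    have ht0 : (0 : ℝ) < t := lt_of_lt_of_le zero_lt_one ht1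
    have h1 := (hC01 t ht).1
    have h2 := (hC01 t ht).2
    have h3 := (hC02 t ht).1
    have h4 := (hC02 t ht).2
    rw [_root_.abs_of_nonneg ht] at h1 h2 h3 h4
    have d1 : ‖φ₁ t‖ ≤ C02 / t ^ 2 := by
      rw [le_div_iff₀ (by positivity)]; nlinarith [h3]
    have d2 : ‖φ₂ t‖ ≤ C02 / t ^ 2 := by
      rw [le_div_iff₀ (by positivity)]; nlinarith [h4]
    have m1 : (t * ‖φ₁ t‖) * ‖φ₁ t‖ ≤ C01 * (C02 / t ^ 2) :=
      mul_le_mul h1 d1 (norm_nonneg _) hC01n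
    have m2 : (t * ‖φ₂ t‖) * ‖φ₂ t‖ ≤ C01 * (C02 / t ^ 2) :=
      mul_le_mul h2 d2 (norm_nonneg _) hC01n
    rw [Real.norm_eq_abs, abs_mul, _root_.abs_of_nonneg ht]
    have habs : |h t| ≤ ‖φ₁ t‖ ^ 2 + ‖φ₂ t‖ ^ 2 := by
      rw [abs_le]; constructor <;> simp only [hh] <;>
        nlinarith [sq_nonneg ‖φ₁ t‖, sq_nonneg ‖φ₂ t‖]
    have : t * |h t| ≤ t * (‖φ₁ t‖ ^ 2 + ‖φ₂ t‖ ^ 2) :=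
      mul_le_mul_of_nonneg_left habs ht
    calc t * |h t| ≤ t * (‖φ₁ t‖ ^ 2 + ‖φ₂ t‖ ^ 2) := this
      _ = (t * ‖φ₁ t‖) * ‖φ₁ t‖ + (t * ‖φ₂ t‖) * ‖φ₂ t‖ := by ring
      _ ≤ C01 * (C02 / t ^ 2) + C01 * (C02 / t ^ 2) := add_le_add m1 m2
      _ = 2 * C01 * C02 / t ^ 2 := by ring
  -- integration by parts
  have ibp : ∫ t in Set.Ioi (0 : ℝ), (h t + X t) = 0 := by
    have := integral_Ioi_of_hasDerivAt_of_tendsto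
      (f := fun t => t * h t) (f' := fun t => h t + X t) (a := 0) (m := 0)
      ((continuous_id.mul hconth).continuousWithinAt)
      (fun x _ => hgder x) (inth.add intX) hg0
    simpa using this
  have hXint : ∫ t in Set.Ioi (0 : ℝ), X t = - ∫ t in Set.Ioi (0 : ℝ), h t := by
    rw [integral_add inth intX] at ibp
    linarith
  -- put everything together
  have lhs_eq : (∫ t in Set.Ioi (0 : ℝ),
      (‖-(deriv φ₂ t) + (t : ℂ) * φ₂ t‖ ^ 2 + ‖deriv φ₁ t + (t : ℂ) * φ₁ t‖ ^ 2))
      = ∫ t in Set.Ioi (0 : ℝ), (A t + B t + X t) := by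
    apply integral_congr_ae
    filter_upwards with t using key t
  have iAB : IntegrableOn (fun t => A t + B t) (Set.Ioi (0 : ℝ)) := intA.add intB
  have split1 := integral_add iAB intX
  rw [lhs_eq, split1, integral_add intA intB, hXint]
  ring
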